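/- arXiv:1501.02079 — 3 statements merged into one kernel-verified Lean document; each statement's English description precedes it below -/
import Mathlib

section
/- Let X be a quaternionic normed right linear space and Y a subspace. Every bounded right-linear functional λ : Y → ℍ extends to a bounded right-linear functional Λ : X → ℍ with Λ|_Y = λ and ‖Λ‖ = ‖λ‖. -/
noncomputable section

open Quaternion MulOpposite

lemma abs_re_le_norm' (q : Quaternion ℝ) : |q.re| ≤ ‖q‖ := by
  have h1 : q.re ^ 2 ≤ normSq q := by
    rw [Quaternion.normSq_def']; nlinarith [sq_nonneg q.imI, sq_nonneg q.imJ, sq_nonneg q.imK]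
  have h2 : normSq q = ‖q‖ * ‖q‖ := Quaternion.normSq_eq_norm_mul_self q
  nlinarith [abs_nonneg q.re, norm_nonneg q, sq_abs q.re]

@[simp] lemma qmk_mul_re (p : Quaternion ℝ) (a b c d : ℝ) :
    (@HMul.hMul (Quaternion ℝ) (Quaternion ℝ) (Quaternion ℝ) _ p ⟨a, b, c, d⟩).re = p.re * a - p.imI * b - p.imJ * c - p.imK * d :=
  Quaternion.re_mul _ _

@[simp] lemma qmk_mul_imI (p : Quaternion ℝ) (a b c d : ℝ) :
    (@HMul.hMul (Quaternion ℝ) (Quaternion ℝ) (Quaternion ℝ) _ p ⟨a, b, c, d⟩).imI = p.re * b + p.imI * a + p.imJ * d - p.imK * c :=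
  Quaternion.imI_mul _ _

@[simp] lemma qmk_mul_imJ (p : Quaternion ℝ) (a b c d : ℝ) :
    (@HMul.hMul (Quaternion ℝ) (Quaternion ℝ) (Quaternion ℝ) _ p ⟨a, b, c, d⟩).imJ = p.re * c - p.imI * d + p.imJ * a + p.imK * b :=
  Quaternion.imJ_mul _ _

@[simp] lemma qmk_mul_imK (p : Quaternion ℝ) (a b c d : ℝ) :
    (@HMul.hMul (Quaternion ℝ) (Quaternion ℝ) (Quaternion ℝ) _ p ⟨a, b, c, d⟩).imK = p.re * d + p.imI * c - p.imJ * b + p.imK * a :=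
  Quaternion.imK_mul _ _

@[simp] lemma qmk_mk_mul_re (e f g h a b c d : ℝ) :
    (@HMul.hMul (Quaternion ℝ) (Quaternion ℝ) (Quaternion ℝ) _ ⟨e, f, g, h⟩ ⟨a, b, c, d⟩).re
      = e * a - f * b - g * c - h * d :=
  Quaternion.re_mul _ _

@[simp] lemma qmk_mk_mul_imI (e f g h a b c d : ℝ) :
    (@HMul.hMul (Quaternion ℝ) (Quaternion ℝ) (Quaternion ℝ) _ ⟨e, f, g, h⟩ ⟨a, b, c, d⟩).imI
      = e * b + f * a + g * d - h * c :=
  Quaternion.imI_mul _ _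

@[simp] lemma qmk_mk_mul_imJ (e f g h a b c d : ℝ) :
    (@HMul.hMul (Quaternion ℝ) (Quaternion ℝ) (Quaternion ℝ) _ ⟨e, f, g, h⟩ ⟨a, b, c, d⟩).imJ
      = e * c - f * d + g * a + h * b :=
  Quaternion.imJ_mul _ _

@[simp] lemma qmk_mk_mul_imK (e f g h a b c d : ℝ) :
    (@HMul.hMul (Quaternion ℝ) (Quaternion ℝ) (Quaternion ℝ) _ ⟨e, f, g, h⟩ ⟨a, b, c, d⟩).imK
      = e * d + f * c - g * b + h * a :=
  Quaternion.imK_mul _ _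

@[simp] lemma qmk_smul (r a b c d : ℝ) :
    @HSMul.hSMul ℝ (Quaternion ℝ) (Quaternion ℝ) _ r ⟨a, b, c, d⟩ = (⟨r * a, r * b, r * c, r * d⟩ : Quaternion ℝ) :=
  rfl

@[simp] lemma qmk_neg (a b c d : ℝ) :
    @Neg.neg (Quaternion ℝ) _ ⟨a, b, c, d⟩ = (⟨-a, -b, -c, -d⟩ : Quaternion ℝ) :=
  rfl

@[simp] lemma qmk_add_re (p : Quaternion ℝ) (a b c d : ℝ) :
    (@HAdd.hAdd (Quaternion ℝ) (Quaternion ℝ) (Quaternion ℝ) _ p ⟨a, b, c, d⟩).re = p.re + a :=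
  rfl

@[simp] lemma qmk_add_imI (p : Quaternion ℝ) (a b c d : ℝ) :
    (@HAdd.hAdd (Quaternion ℝ) (Quaternion ℝ) (Quaternion ℝ) _ p ⟨a, b, c, d⟩).imI = p.imI + b :=
  rfl

@[simp] lemma qmk_add_imJ (p : Quaternion ℝ) (a b c d : ℝ) :
    (@HAdd.hAdd (Quaternion ℝ) (Quaternion ℝ) (Quaternion ℝ) _ p ⟨a, b, c, d⟩).imJ = p.imJ + c :=
  rfl

@[simp] lemma qmk_add_imK (p : Quaternion ℝ) (a b c d : ℝ) :
    (@HAdd.hAdd (Quaternion ℝ) (Quaternion ℝ) (Quaternion ℝ) _ p ⟨a, b, c, d⟩).imK = p.imK + d :=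
  rfl

/-- Quaternionic Hahn–Banach theorem: let `X` be a quaternionic normed right linear space
(a right `ℍ`-module, encoded as a module over `ℍᵐᵒᵖ`, with `‖x • q‖ = ‖x‖ * |q|`) and `Y`
a subspace. Every bounded right-linear functional `λ : Y → ℍ` extends to a right-linear
functional `Λ : X → ℍ` with `Λ|_Y = λ` and `‖Λ‖ = ‖λ‖` (every bound for `λ` is a bound for
`Λ`; together with the extension property this gives equality of norms). -/
theorem quaternionic_hahn_banach
    (X : Type*) [NormedAddCommGroup X] [Module (Quaternion ℝ)ᵐᵒᵖ X]
    (hX : ∀ (x : X) (q : Quaternion ℝ), ‖(op q) • x‖ = ‖x‖ * ‖q‖)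
    (Y : Submodule (Quaternion ℝ)ᵐᵒᵖ X)
    (lam : Y → Quaternion ℝ)
    (hadd : ∀ y z : Y, lam (y + z) = lam y + lam z)
    (hlin : ∀ (y : Y) (q : Quaternion ℝ), lam ((op q) • y) = lam y * q)
    (hbdd : ∃ C : ℝ, ∀ y : Y, ‖lam y‖ ≤ C * ‖(y : X)‖) :
    ∃ Lam : X → Quaternion ℝ,
      (∀ x z : X, Lam (x + z) = Lam x + Lam z)
      ∧ (∀ (x : X) (q : Quaternion ℝ), Lam ((op q) • x) = Lam x * q)
      ∧ (∀ y : Y, Lam (y : X) = lam y)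
      ∧ (∀ C : ℝ, 0 ≤ C → (∀ y : Y, ‖lam y‖ ≤ C * ‖(y : X)‖) →
          ∀ x : X, ‖Lam x‖ ≤ C * ‖x‖) := by
  let M : Module ℝ X := Module.compHom X (algebraMap ℝ (Quaternion ℝ)ᵐᵒᵖ)
  letI : NormedSpace ℝ X :=
    { toModule := M
      norm_smul_le := fun r x => le_of_eq (by
        show ‖op ((r : Quaternion ℝ)) • x‖ = _
        rw [hX, Quaternion.norm_coe, mul_comm]) }
  have hrs : ∀ (r : ℝ) (x : X), r • x = op ((r : Quaternion ℝ)) • x := fun r x => rfl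
  have hcomp : ∀ (p q : Quaternion ℝ) (x : X), op p • op q • x = op (q * p) • x := by
    intro p q x; rw [← mul_smul, ← op_mul]
  haveI : IsScalarTower ℝ (Quaternion ℝ)ᵐᵒᵖ X := by
    constructor
    intro r q x
    obtain ⟨q⟩ := q
    show (r • op q) • x = op ((r : Quaternion ℝ)) • op q • x
    have h : r • op q = op (q * ((r : Quaternion ℝ))) := by
      rw [← Quaternion.coe_commutes, Quaternion.coe_mul_eq_smul, op_smul]
    rw [hcomp, h]
  haveI : SMulCommClass ℝ (Quaternion ℝ)ᵐᵒᵖ X := by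
    constructor
    intro r q x
    obtain ⟨q⟩ := q
    show r • op q • x = op q • r • x
    rw [hrs, hrs, hcomp, hcomp, Quaternion.coe_commutes]
  set Y' : Subspace ℝ X := Y.restrictScalars ℝ with hY'
  -- the real part functional on Y
  let f₀ : Y' →ₗ[ℝ] ℝ :=
    { toFun := fun y => (lam ⟨(y : X), y.2⟩).re
      map_add' := by
        intro y z
        show (lam ⟨((y : X) + z), _⟩).re = (lam ⟨(y : X), y.2⟩).re + (lam ⟨(z : X), z.2⟩).re
        have h : (⟨((y : X) + z), Y.add_mem y.2 z.2⟩ : Y)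
            = ⟨(y : X), y.2⟩ + ⟨(z : X), z.2⟩ := rfl
        rw [h, hadd]; rfl
      map_smul' := by
        intro r y
        show (lam ⟨(r • (y : X)), _⟩).re = r * (lam ⟨(y : X), y.2⟩).re
        have h : (⟨(r • (y : X)), by rw [hrs]; exact Y.smul_mem _ y.2⟩ : Y)
            = op ((r : Quaternion ℝ)) • ⟨(y : X), y.2⟩ := by
          apply Subtype.ext
          show r • (y : X) = _
          rw [hrs]; rfl
        rw [h, hlin]
        rw [← Quaternion.coe_commutes, Quaternion.coe_mul_eq_smul]
        simp
    }
  obtain ⟨C₀, hC₀⟩ := hbdd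
  have hf₀ : ∀ y : Y', ‖f₀ y‖ ≤ C₀ * ‖(y : X)‖ := by
    intro y
    exact le_trans (abs_re_le_norm' _) (hC₀ ⟨(y : X), y.2⟩)
  let f : Y' →L[ℝ] ℝ := f₀.mkContinuous C₀ hf₀
  obtain ⟨g, hg, hgnorm⟩ := exists_extension_norm_eq Y' f
  set I : Quaternion ℝ := ⟨0, 1, 0, 0⟩ with hI_def
  set J : Quaternion ℝ := ⟨0, 0, 1, 0⟩ with hJ_def
  set K : Quaternion ℝ := ⟨0, 0, 0, 1⟩ with hK_def
  set Lam : X → Quaternion ℝ :=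
    fun x => ⟨g x, -g (op I • x), -g (op J • x), -g (op K • x)⟩ with hLam_def
  have hgneg : ∀ (q : Quaternion ℝ) (x : X), g (op (-q) • x) = - g (op q • x) := by
    intro q x; rw [op_neg, neg_smul, map_neg]
  -- additivity
  have hLadd : ∀ x z : X, Lam (x + z) = Lam x + Lam z := by
    intro x z
    apply QuaternionAlgebra.ext
    · show g (x + z) = g x + g z
      exact map_add g x z
    · show -g (op I • (x + z)) = -g (op I • x) + -g (op I • z)
      rw [smul_add, map_add]; ring
    · show -g (op J • (x + z)) = -g (op J • x) + -g (op J • z)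
      rw [smul_add, map_add]; ring
    · show -g (op K • (x + z)) = -g (op K • x) + -g (op K • z)
      rw [smul_add, map_add]; ring
  -- real scalars
  have hLr : ∀ (r : ℝ) (x : X), Lam (r • x) = r • Lam x := by
    intro r x
    have hc : ∀ q : Quaternion ℝ, op q • (r • x) = r • (op q • x) := fun q =>
      (smul_comm r (op q) x).symm
    apply QuaternionAlgebra.ext
    · show g (r • x) = r * g x
      rw [map_smul]; rfl
    · show -g (op I • (r • x)) = r * -g (op I • x)
      rw [hc, map_smul]; show -(r * _) = _; ring
    · show -g (op J • (r • x)) = r * -g (op J • x)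
      rw [hc, map_smul]; show -(r * _) = _; ring
    · show -g (op K • (r • x)) = r * -g (op K • x)
      rw [hc, map_smul]; show -(r * _) = _; ring
  -- multiplication table
  have hII : I * I = -1 := by
    rw [hI_def]
    apply QuaternionAlgebra.ext <;>
      simp [Quaternion.re_mul, Quaternion.imI_mul, Quaternion.imJ_mul, Quaternion.imK_mul]
  have hJJ : J * J = -1 := by
    rw [hJ_def]
    apply QuaternionAlgebra.ext <;>
      simp [Quaternion.re_mul, Quaternion.imI_mul, Quaternion.imJ_mul, Quaternion.imK_mul]
  have hKK : K * K = -1 := by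
    rw [hK_def]
    apply QuaternionAlgebra.ext <;>
      simp [Quaternion.re_mul, Quaternion.imI_mul, Quaternion.imJ_mul, Quaternion.imK_mul]
  have hIJ : I * J = K := by
    rw [hI_def, hJ_def, hK_def]
    apply QuaternionAlgebra.ext <;>
      simp [Quaternion.re_mul, Quaternion.imI_mul, Quaternion.imJ_mul, Quaternion.imK_mul]
  have hJI : J * I = -K := by
    rw [hI_def, hJ_def, hK_def]
    apply QuaternionAlgebra.ext <;>
      simp [Quaternion.re_mul, Quaternion.imI_mul, Quaternion.imJ_mul, Quaternion.imK_mul]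
  have hJK : J * K = I := by
    rw [hI_def, hJ_def, hK_def]
    apply QuaternionAlgebra.ext <;>
      simp [Quaternion.re_mul, Quaternion.imI_mul, Quaternion.imJ_mul, Quaternion.imK_mul]
  have hKJ : K * J = -I := by
    rw [hI_def, hJ_def, hK_def]
    apply QuaternionAlgebra.ext <;>
      simp [Quaternion.re_mul, Quaternion.imI_mul, Quaternion.imJ_mul, Quaternion.imK_mul]
  have hKI : K * I = J := by
    rw [hI_def, hJ_def, hK_def]
    apply QuaternionAlgebra.ext <;>
      simp [Quaternion.re_mul, Quaternion.imI_mul, Quaternion.imJ_mul, Quaternion.imK_mul]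
  have hIK : I * K = -J := by
    rw [hI_def, hJ_def, hK_def]
    apply QuaternionAlgebra.ext <;>
      simp [Quaternion.re_mul, Quaternion.imI_mul, Quaternion.imJ_mul, Quaternion.imK_mul]
  have hneg1 : ∀ x : X, op (-1 : Quaternion ℝ) • x = -x := by
    intro x; rw [op_neg, op_one, neg_smul, one_smul]
  have hmulI : ∀ p : Quaternion ℝ, p * I = ⟨-p.imI, p.re, p.imK, -p.imJ⟩ := by
    intro p
    apply QuaternionAlgebra.ext <;>
      simp [hI_def, Quaternion.re_mul, Quaternion.imI_mul, Quaternion.imJ_mul, Quaternion.imK_mul]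
  have hmulJ : ∀ p : Quaternion ℝ, p * J = ⟨-p.imJ, -p.imK, p.re, p.imI⟩ := by
    intro p
    apply QuaternionAlgebra.ext <;>
      simp [hJ_def, Quaternion.re_mul, Quaternion.imI_mul, Quaternion.imJ_mul, Quaternion.imK_mul]
  have hmulK : ∀ p : Quaternion ℝ, p * K = ⟨-p.imK, p.imJ, -p.imI, p.re⟩ := by
    intro p
    apply QuaternionAlgebra.ext <;>
      simp [hK_def, Quaternion.re_mul, Quaternion.imI_mul, Quaternion.imJ_mul, Quaternion.imK_mul]
  have hLI : ∀ x : X, Lam (op I • x) = Lam x * I := by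
    intro x
    rw [hmulI]
    apply QuaternionAlgebra.ext
    · show g (op I • x) = -(-g (op I • x)); ring
    · show -g (op I • op I • x) = g x
      rw [hcomp, hII, hneg1, map_neg]; ring
    · show -g (op J • op I • x) = -g (op K • x)
      rw [hcomp, hIJ]
    · show -g (op K • op I • x) = -(-g (op J • x))
      rw [hcomp, hIK, hgneg]
  have hLJ : ∀ x : X, Lam (op J • x) = Lam x * J := by
    intro x
    rw [hmulJ]
    apply QuaternionAlgebra.ext
    · show g (op J • x) = -(-g (op J • x)); ring
    · show -g (op I • op J • x) = -(-g (op K • x))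
      rw [hcomp, hJI, hgneg]
    · show -g (op J • op J • x) = g x
      rw [hcomp, hJJ, hneg1, map_neg]; ring
    · show -g (op K • op J • x) = -g (op I • x)
      rw [hcomp, hJK]
  have hLK : ∀ x : X, Lam (op K • x) = Lam x * K := by
    intro x
    rw [hmulK]
    apply QuaternionAlgebra.ext
    · show g (op K • x) = -(-g (op K • x)); ring
    · show -g (op I • op K • x) = -g (op J • x)
      rw [hcomp, hKI]
    · show -g (op J • op K • x) = -(-g (op I • x))
      rw [hcomp, hKJ, hgneg]
    · show -g (op K • op K • x) = g x
      rw [hcomp, hKK, hneg1, map_neg]; ring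
  -- full right-linearity
  have hLmul : ∀ (x : X) (q : Quaternion ℝ), Lam (op q • x) = Lam x * q := by
    intro x q
    have hq : q = (q.re : Quaternion ℝ) + q.imI • I + q.imJ • J + q.imK • K := by
      apply QuaternionAlgebra.ext <;>
        simp [hI_def, hJ_def, hK_def]
    have hdecomp : op q • x
        = q.re • x + q.imI • (op I • x) + q.imJ • (op J • x) + q.imK • (op K • x) := by
      conv_lhs => rw [hq]
      rw [op_add, op_add, op_add, add_smul, add_smul, add_smul,
        op_smul, op_smul, op_smul, smul_assoc, smul_assoc, smul_assoc, ← hrs]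
    rw [hdecomp, hLadd, hLadd, hLadd, hLr, hLr, hLr, hLr, hLI, hLJ, hLK]
    conv_rhs => rw [hq]
    rw [mul_add, mul_add, mul_add, mul_smul_comm, mul_smul_comm, mul_smul_comm,
      ← Quaternion.coe_commutes, Quaternion.coe_mul_eq_smul]
  -- extension property
  have hLext : ∀ y : Y, Lam (y : X) = lam y := by
    intro y
    have hgy : ∀ (p : Quaternion ℝ), g (op p • (y : X)) = (lam (op p • y)).re := by
      intro p
      have hmem : op p • (y : X) ∈ Y' := Y.smul_mem (op p) y.2
      have h1 := hg ⟨op p • (y : X), hmem⟩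
      have h2 : (⟨op p • (y : X), hmem⟩ : Y) = op p • y := Subtype.ext rfl
      rw [h1]
      show (lam (⟨op p • (y : X), hmem⟩ : Y)).re = (lam (op p • y)).re
      rw [h2]
    have hgy1 : g (y : X) = (lam y).re := by
      have h1 := hg ⟨(y : X), y.2⟩
      rw [h1]
      rfl
    apply QuaternionAlgebra.ext
    · exact hgy1
    · show -g (op I • (y : X)) = (lam y).imI
      rw [hgy, hlin, hmulI]; ring
    · show -g (op J • (y : X)) = (lam y).imJ
      rw [hgy, hlin, hmulJ]; ring
    · show -g (op K • (y : X)) = (lam y).imK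
      rw [hgy, hlin, hmulK]; ring
  -- norm bound
  refine ⟨Lam, hLadd, hLmul, hLext, ?_⟩
  intro C hC hb x
  by_cases h0 : Lam x = 0
  · rw [h0, norm_zero]; positivity
  have hgle : ‖g‖ ≤ C := by
    rw [hgnorm]
    refine ContinuousLinearMap.opNorm_le_bound f hC (fun y => ?_)
    exact le_trans (abs_re_le_norm' _) (hb ⟨(y : X), y.2⟩)
  set q : Quaternion ℝ := ‖Lam x‖⁻¹ • star (Lam x) with hq_def
  have hq1 : Lam x * q = ((‖Lam x‖ : ℝ) : Quaternion ℝ) := by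
    rw [hq_def, mul_smul_comm, Quaternion.self_mul_star,
      Quaternion.normSq_eq_norm_mul_self, Quaternion.smul_coe]
    congr 1
    field_simp
  have hqn : ‖q‖ = 1 := by
    rw [hq_def, norm_smul, Quaternion.norm_star, norm_inv, norm_norm]
    field_simp [norm_ne_zero_iff.mpr h0]
  have key : ‖Lam x‖ = g (op q • x) := by
    have h1 : Lam (op q • x) = ((‖Lam x‖ : ℝ) : Quaternion ℝ) := by
      rw [hLmul, hq1]
    have h2 : (Lam (op q • x)).re = g (op q • x) := rfl
    rw [← h2, h1, Quaternion.re_coe]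
  rw [key]
  calc g (op q • x) ≤ |g (op q • x)| := le_abs_self _
    _ ≤ ‖g‖ * ‖op q • x‖ := g.le_opNorm _
    _ = ‖g‖ * (‖x‖ * ‖q‖) := by rw [hX]
    _ = ‖g‖ * ‖x‖ := by rw [hqn, mul_one]
    _ ≤ C * ‖x‖ := mul_le_mul_of_nonneg_right hgle (norm_nonneg x)
end
end

section
/- Let f ∈ L¹ₛ(∂𝔹) be a slice function. Then f ∈ BMO(∂𝔹) (i.e. sup over imaginary units I of the BMO norm of the restriction to ∂𝔹_I is finite) if and only if f ∈ BMO(∂𝔹_I) for every single imaginary unit I; indeed finiteness on one slice implies finiteness on every slice with comparable norm. -/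
noncomputable section

open MeasureTheory Quaternion

instance : MeasurableSpace (Quaternion ℝ) := borel _
instance : BorelSpace (Quaternion ℝ) := ⟨rfl⟩

/-- The sphere `𝕊` of imaginary units of `ℍ`. -/
def IU : Type := {I : Quaternion ℝ // I ^ 2 = -1}

instance : MeasurableSpace IU := Subtype.instMeasurableSpace

/-- The point `e^{tI} = cos t + (sin t) I`. -/
def eI (I : Quaternion ℝ) (t : ℝ) : Quaternion ℝ :=
  ((Real.cos t : ℝ) : Quaternion ℝ) + Real.sin t • I

/-- The normalized measure `dΣ(e^{tI}) = dσ(I) dt` on `∂𝔹`, obtained by pushing forward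
`σ ⊗ (dt on (0, 2π])` under `(I, t) ↦ e^{tI}` and normalizing by `2π`. -/
def sphereMeasure (σ : Measure IU) : Measure (Quaternion ℝ) :=
  (ENNReal.ofReal (2 * Real.pi))⁻¹ •
    Measure.map (fun p : IU × ℝ => eI p.1.1 p.2)
      (σ.prod (volume.restrict (Set.Ioc 0 (2 * Real.pi))))

/-- A slice function on `∂𝔹`: it satisfies the representation formula. -/
def IsSlice (f : Quaternion ℝ → Quaternion ℝ) : Prop :=
  ∀ x y : ℝ, ∀ I J : Quaternion ℝ, I ^ 2 = -1 → J ^ 2 = -1 → x ^ 2 + y ^ 2 = 1 →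
    f ((x : Quaternion ℝ) + y • J) =
      ((1 - J * I) / 2) * f ((x : Quaternion ℝ) + y • I) +
      ((1 + J * I) / 2) * f ((x : Quaternion ℝ) - y • I)

/-- The `n`-th Fourier coefficient of (the restriction to the slice of `I` of) a function
on `∂𝔹`: `φ̂(n) = (1/2π) ∫₀^{2π} e^{-nIt} φ(e^{It}) dt`. -/
def fourierCoef (φ : Quaternion ℝ → Quaternion ℝ) (I : Quaternion ℝ) (n : ℤ) : Quaternion ℝ :=
  (2 * Real.pi)⁻¹ • ∫ t in (0:ℝ)..(2 * Real.pi), eI I (-(n * t)) * φ (eI I t)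


/-- The set of mean oscillations of (the restriction to the circle `∂𝔹_I` of) `f` over arcs
`a = (α, β)` with `|a| ≤ 2π`.  `f ∈ BMO(∂𝔹_I)` means this set is bounded above, and
`‖f‖_{BMO(∂𝔹_I)}` is its supremum. -/
def meanOscSet (f : Quaternion ℝ → Quaternion ℝ) (I : Quaternion ℝ) : Set ℝ :=
  {m : ℝ | ∃ α β : ℝ, α < β ∧ β - α ≤ 2 * Real.pi ∧
    m = (β - α)⁻¹ * ∫ t in α..β,
      ‖f (eI I t) - (β - α)⁻¹ • ∫ s in α..β, f (eI I s)‖}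


lemma osc_bound (g h : ℝ → Quaternion ℝ) (A B : Quaternion ℝ) (hA : ‖A‖ ≤ 1) (hB : ‖B‖ ≤ 1)
    (α β : ℝ) (hab : α < β)
    (hg : IntervalIntegrable g volume α β)
    (hgn : IntervalIntegrable (fun t => g (-t)) volume α β)
    (hh : IntervalIntegrable h volume α β)
    (hrep : ∀ t, h t = A * g t + B * g (-t)) :
    (β - α)⁻¹ * ∫ t in α..β, ‖h t - (β - α)⁻¹ • ∫ s in α..β, h s‖ ≤
      ((β - α)⁻¹ * ∫ t in α..β, ‖g t - (β - α)⁻¹ • ∫ s in α..β, g s‖)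
      + (β - α)⁻¹ * ∫ t in α..β, ‖g (-t) - (β - α)⁻¹ • ∫ s in α..β, g (-s)‖ := by
  have hinv : (0:ℝ) ≤ (β - α)⁻¹ := inv_nonneg.2 (by linarith)
  have hA1 := (ContinuousLinearMap.mul ℝ (Quaternion ℝ) A).intervalIntegral_comp_comm hg
  have hB1 := (ContinuousLinearMap.mul ℝ (Quaternion ℝ) B).intervalIntegral_comp_comm hgn
  simp only [ContinuousLinearMap.mul_apply'] at hA1 hB1
  set c1 : Quaternion ℝ := (β - α)⁻¹ • ∫ s in α..β, g s with hc1
  set c2 : Quaternion ℝ := (β - α)⁻¹ • ∫ s in α..β, g (-s) with hc2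
  have hcsum : (β - α)⁻¹ • ∫ s in α..β, h s = A * c1 + B * c2 := by
    have h1 : ∫ s in α..β, h s = (A * ∫ s in α..β, g s) + B * ∫ s in α..β, g (-s) := by
      rw [← hA1, ← hB1, ← intervalIntegral.integral_add (hg.const_mul A) (hgn.const_mul B)]
      exact intervalIntegral.integral_congr fun t _ => hrep t
    rw [h1, smul_add, hc1, hc2, mul_smul_comm, mul_smul_comm]
  have hInt1 : IntervalIntegrable (fun t => ‖g t - c1‖) volume α β :=
    (hg.sub (intervalIntegrable_const)).norm
  have hInt2 : IntervalIntegrable (fun t => ‖g (-t) - c2‖) volume α β :=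
    (hgn.sub (intervalIntegrable_const)).norm
  have hIntJ : IntervalIntegrable (fun t => ‖h t - (β - α)⁻¹ • ∫ s in α..β, h s‖) volume α β :=
    (hh.sub (intervalIntegrable_const)).norm
  have hintle : (∫ t in α..β, ‖h t - (β - α)⁻¹ • ∫ s in α..β, h s‖) ≤
      ∫ t in α..β, (‖g t - c1‖ + ‖g (-t) - c2‖) := by
    refine intervalIntegral.integral_mono_on hab.le hIntJ (hInt1.add hInt2) fun t ht => ?_
    have hpt : h t - (β - α)⁻¹ • ∫ s in α..β, h s = A * (g t - c1) + B * (g (-t) - c2) := by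
      rw [hcsum, hrep t, mul_sub, mul_sub]; abel
    rw [hpt]
    calc ‖A * (g t - c1) + B * (g (-t) - c2)‖
        ≤ ‖A‖ * ‖g t - c1‖ + ‖B‖ * ‖g (-t) - c2‖ :=
          (norm_add_le _ _).trans (by rw [norm_mul, norm_mul])
      _ ≤ ‖g t - c1‖ + ‖g (-t) - c2‖ := by
          have := norm_nonneg (g t - c1); have := norm_nonneg (g (-t) - c2)
          nlinarith
  calc (β - α)⁻¹ * ∫ t in α..β, ‖h t - (β - α)⁻¹ • ∫ s in α..β, h s‖
      ≤ (β - α)⁻¹ * ∫ t in α..β, (‖g t - c1‖ + ‖g (-t) - c2‖) :=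
        mul_le_mul_of_nonneg_left hintle hinv
    _ = _ := by rw [intervalIntegral.integral_add hInt1 hInt2, mul_add]

lemma norm_of_imUnit {I : Quaternion ℝ} (hI : I ^ 2 = -1) : ‖I‖ = 1 := by
  have h2 : ‖I‖ ^ 2 = 1 := by rw [← norm_pow, hI]; simp
  nlinarith [norm_nonneg I]

lemma slice_key (f : Quaternion ℝ → Quaternion ℝ) (hf : IsSlice f)
    (hloc : ∀ I : Quaternion ℝ, I ^ 2 = -1 → ∀ α β : ℝ,
      IntervalIntegrable (fun t => f (eI I t)) MeasureTheory.volume α β)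
    (I J : Quaternion ℝ) (hI : I ^ 2 = -1) (hJ : J ^ 2 = -1) :
    ∀ m ∈ meanOscSet f J, ∃ m₁ ∈ meanOscSet f I, ∃ m₂ ∈ meanOscSet f I, m ≤ m₁ + m₂ := by
  rintro m ⟨α, β, hab, hlen, rfl⟩
  have hnI : ‖I‖ = 1 := norm_of_imUnit hI
  have hnJ : ‖J‖ = 1 := norm_of_imUnit hJ
  have hJI : ‖J * I‖ = 1 := by rw [norm_mul, hnI, hnJ, mul_one]
  have h2 : ‖(2 : Quaternion ℝ)‖ = 2 := by
    rw [show (2 : Quaternion ℝ) = ((2 : ℝ) : Quaternion ℝ) by norm_cast, Quaternion.norm_coe]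
    norm_num
  have hA : ‖(1 - J * I) / 2‖ ≤ 1 := by
    rw [norm_div, h2]
    have : ‖(1 : Quaternion ℝ) - J * I‖ ≤ 2 :=
      (norm_sub_le _ _).trans (by rw [norm_one, hJI]; norm_num)
    linarith
  have hB : ‖(1 + J * I) / 2‖ ≤ 1 := by
    rw [norm_div, h2]
    have : ‖(1 : Quaternion ℝ) + J * I‖ ≤ 2 :=
      (norm_add_le _ _).trans (by rw [norm_one, hJI]; norm_num)
    linarith
  have hrep : ∀ t, f (eI J t) =
      (1 - J * I) / 2 * f (eI I t) + (1 + J * I) / 2 * f (eI I (-t)) := by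
    intro t
    have h1 : eI I (-t) = ((Real.cos t : ℝ) : Quaternion ℝ) - Real.sin t • I := by
      simp [eI, Real.cos_neg, Real.sin_neg, sub_eq_add_neg]
    have hx := hf (Real.cos t) (Real.sin t) I J hI hJ (Real.cos_sq_add_sin_sq t)
    have e1 : eI J t = ((Real.cos t : ℝ) : Quaternion ℝ) + Real.sin t • J := rfl
    have e2 : eI I t = ((Real.cos t : ℝ) : Quaternion ℝ) + Real.sin t • I := rfl
    rw [e1, hx, ← e2, ← h1]
  have hgn : IntervalIntegrable (fun t => f (eI I (-t))) volume α β := by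
    simpa using (IntervalIntegrable.iff_comp_neg (by simp)).mp (hloc I hI (-α) (-β))
  have hbound := osc_bound (fun t => f (eI I t)) (fun t => f (eI J t))
    ((1 - J * I) / 2) ((1 + J * I) / 2) hA hB α β hab
    (hloc I hI α β) hgn (hloc J hJ α β) hrep
  refine ⟨_, ⟨α, β, hab, hlen, rfl⟩, _, ?_, hbound⟩
  refine ⟨-β, -α, by linarith, by linarith, ?_⟩
  have e0 : ((-α : ℝ) - -β) = β - α := by ring
  rw [e0]
  have e1 : (∫ s in (-β)..(-α), f (eI I s)) = ∫ s in α..β, f (eI I (-s)) :=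
    (intervalIntegral.integral_comp_neg (f := fun s => f (eI I s))).symm
  rw [e1]
  congr 1
  exact (intervalIntegral.integral_comp_neg
    (f := fun t => ‖f (eI I t) - (β - α)⁻¹ • ∫ s in α..β, f (eI I (-s))‖))

lemma meanOsc_nonneg (f : Quaternion ℝ → Quaternion ℝ) (I : Quaternion ℝ) :
    ∀ m ∈ meanOscSet f I, 0 ≤ m := by
  rintro m ⟨α, β, hab, _, rfl⟩
  exact mul_nonneg (inv_nonneg.2 (by linarith))
    (intervalIntegral.integral_nonneg hab.le fun t _ => norm_nonneg _)

lemma exists_imUnit : ((⟨0, 1, 0, 0⟩ : Quaternion ℝ)) ^ 2 = -1 := by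
  ext <;> simp [pow_two]

/-- For a slice function `f ∈ L¹ₛ(∂𝔹)`: `f ∈ BMO(∂𝔹)` (i.e. `sup_{I ∈ 𝕊} ‖f‖_{BMO(∂𝔹_I)}`
is finite) iff `f ∈ BMO(∂𝔹_I)` for every imaginary unit `I`; moreover membership in
`BMO(∂𝔹_I)` on one slice implies membership on every other slice. -/
theorem slice_BMO_characterization (σ : Measure IU) [IsProbabilityMeasure σ]
    (f : Quaternion ℝ → Quaternion ℝ) (hf : IsSlice f)
    (hf1 : Integrable f (sphereMeasure σ))
    (hloc : ∀ I : Quaternion ℝ, I ^ 2 = -1 → ∀ α β : ℝ,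
      IntervalIntegrable (fun t => f (eI I t)) MeasureTheory.volume α β) :
    ((∃ M : ℝ, ∀ I : Quaternion ℝ, I ^ 2 = -1 → ∀ m ∈ meanOscSet f I, m ≤ M) ↔
      (∀ I : Quaternion ℝ, I ^ 2 = -1 → BddAbove (meanOscSet f I)))
    ∧
    (∀ I : Quaternion ℝ, I ^ 2 = -1 → BddAbove (meanOscSet f I) →
      ∀ J : Quaternion ℝ, J ^ 2 = -1 → BddAbove (meanOscSet f J)) := by
  have key := slice_key f hf hloc
  constructor
  · constructor
    · rintro ⟨M, hM⟩ I hI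
      exact ⟨M, fun m hm => hM I hI m hm⟩
    · intro h
      obtain ⟨M₀, hM₀⟩ := h _ exists_imUnit
      refine ⟨M₀ + M₀, fun J hJ m hm => ?_⟩
      obtain ⟨m₁, hm₁, m₂, hm₂, hle⟩ := key _ J exists_imUnit hJ m hm
      exact hle.trans (add_le_add (hM₀ hm₁) (hM₀ hm₂))
  · rintro I hI ⟨M, hM⟩ J hJ
    refine ⟨M + M, fun m hm => ?_⟩
    obtain ⟨m₁, hm₁, m₂, hm₂, hle⟩ := key I J hI hJ m hm
    exact hle.trans (add_le_add (hM hm₁) (hM hm₂))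
end
end

section
/- Every uniformly bounded sequence {fₙ} of slice regular functions on the quaternionic unit ball 𝔹 has a subsequence converging uniformly on compact subsets of 𝔹 to a slice regular function. -/
noncomputable section

open Quaternion Filter

/-- A slice regular function on the quaternionic unit ball `𝔹`: a function admitting a power
series expansion `f(q) = Σ_{n ≥ 0} qⁿ aₙ` converging in `𝔹`. -/
def SliceRegularOnBall (f : Quaternion ℝ → Quaternion ℝ) : Prop :=
  ∃ a : ℕ → Quaternion ℝ, ∀ q : Quaternion ℝ, ‖q‖ < 1 →
    HasSum (fun n : ℕ => q ^ n * a n) (f q)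

namespace QMontelAux

open Metric
open scoped Topology NNReal Real

noncomputable instance : Module ℂ (Quaternion ℝ) :=
  Module.compHom _ (Quaternion.ofComplex.toRingHom : ℂ →+* Quaternion ℝ)

lemma csmul_def (z : ℂ) (q : Quaternion ℝ) : z • q = (z : Quaternion ℝ) * q := rfl

lemma norm_coeC (z : ℂ) : ‖(z : Quaternion ℝ)‖ = ‖z‖ := by
  rw [show ‖(z : Quaternion ℝ)‖ = Real.sqrt (Quaternion.normSq (z:Quaternion ℝ)) from by
    rw [norm_eq_sqrt_real_inner, Quaternion.inner_self]]
  simp [Quaternion.normSq_def', Complex.norm_def, Complex.normSq_apply,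
    pow_two]

lemma coeC_pow (z : ℂ) (n : ℕ) : ((z ^ n : ℂ) : Quaternion ℝ) = (z : Quaternion ℝ) ^ n := by
  simpa using map_pow Quaternion.ofComplex z n

noncomputable instance : NormedSpace ℂ (Quaternion ℝ) where
  norm_smul_le z q := by rw [csmul_def, norm_mul, norm_coeC]

set_option maxHeartbeats 1000000 in
lemma coeff_le {F : Quaternion ℝ → Quaternion ℝ} {a : ℕ → Quaternion ℝ} {M : ℝ}
    (ha : ∀ q : Quaternion ℝ, ‖q‖ < 1 → HasSum (fun n : ℕ => q ^ n * a n) (F q))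
    (hM : ∀ q : Quaternion ℝ, ‖q‖ < 1 → ‖F q‖ ≤ M) (k : ℕ) : ‖a k‖ ≤ M := by
  set G : ℂ → Quaternion ℝ := fun z => F (z : Quaternion ℝ) with hGdef
  set p : FormalMultilinearSeries ℂ ℂ (Quaternion ℝ) :=
    fun n => ContinuousMultilinearMap.mkPiRing ℂ (Fin n) (a n) with hpdef
  have hpnorm : ∀ n, ‖p n‖ = ‖a n‖ := fun n => ContinuousMultilinearMap.norm_mkPiRing _
  have happ : ∀ (n : ℕ) (z : ℂ), (p n fun _ => z) = z ^ n • a n := by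
    intro n z
    simp [hpdef, ContinuousMultilinearMap.mkPiRing_apply]
  have hps : ∀ z : ℂ, ‖z‖ < 1 → HasSum (fun n : ℕ => p n fun _ => z) (G z) := by
    intro z hz
    have e : (fun n : ℕ => p n fun _ => z) = fun n : ℕ => (z : Quaternion ℝ) ^ n * a n := by
      funext n; rw [happ n z, csmul_def, coeC_pow]
    rw [e]
    exact ha _ (by rwa [norm_coeC])
  -- radius bound
  have hrad : ∀ r : NNReal, (r : ℝ) < 1 → (r : ENNReal) ≤ p.radius := by
    intro r hr
    have hsum := hps (r : ℂ) (by simpa using hr)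
    have ht := hsum.summable.tendsto_atTop_zero
    have ht2 : Tendsto (fun n : ℕ => ‖p n‖ * (r : ℝ) ^ n) atTop (𝓝 0) := by
      have := (continuous_norm.tendsto (0 : Quaternion ℝ)).comp ht
      simp only [Function.comp_def, norm_zero] at this
      refine this.congr fun n => ?_
      rw [happ, norm_smul, hpnorm, norm_pow, mul_comm]
      simp
    exact p.le_radius_of_tendsto ht2
  -- power series on balls
  have hball : ∀ r : NNReal, (r : ℝ) < 1 → HasFPowerSeriesOnBall G p 0 r ∨ (r : ℝ) ≤ 0 := by
    intro r hr
    rcases le_or_gt (r : ℝ) 0 with h0 | h0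
    · exact Or.inr h0
    refine Or.inl ⟨hrad r hr, by exact_mod_cast h0, ?_⟩
    intro y hy
    have hy' : ‖y‖ < 1 := by
      rw [EMetric.mem_ball, edist_zero_right] at hy
      have : (‖y‖₊ : ℝ) < (r : ℝ) := by exact_mod_cast hy
      exact this.trans hr
    simpa using hps y hy'
  -- Cauchy estimate on radius r
  have key : ∀ r : ℝ, 0 < r → r < 1 → ‖a k‖ * r ^ k ≤ M := by
    intro r hr0 hr1
    set R : NNReal := ⟨r, hr0.le⟩ with hRdef
    have hR1 : (R : ℝ) < 1 := hr1
    have hRpos : (0:ℝ) < R := hr0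
    set r' : NNReal := ⟨(1 + r) / 2, by positivity⟩ with hr'def
    have hr'1 : (r' : ℝ) < 1 := by show (1 + r) / 2 < 1; linarith
    have hrr' : (r : ℝ) < r' := by show r < (1 + r) / 2; linarith
    obtain hball' | habs := hball r' hr'1
    swap
    · exfalso; simp [hr'def] at habs; linarith
    have hdiff : DifferentiableOn ℂ G (closedBall (0:ℂ) R) := by
      refine (hball'.differentiableOn).mono ?_
      intro z hz
      rw [EMetric.mem_ball, edist_zero_right]
      have : ‖z‖ ≤ (R:ℝ) := by simpa using hz
      have h2 : ‖z‖₊ < r' := by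
        apply lt_of_le_of_lt _ (show R < r' by exact_mod_cast hrr')
        exact_mod_cast this
      exact_mod_cast h2
    have hc := hdiff.hasFPowerSeriesOnBall (show 0 < R from by exact_mod_cast hRpos)
    obtain hballR | habs := hball R hR1
    swap
    · linarith
    have hpeq : p = cauchyPowerSeries G 0 R :=
      hballR.hasFPowerSeriesAt.eq_formalMultilinearSeries hc.hasFPowerSeriesAt
    -- bound the integral
    have hcont : Continuous fun θ : ℝ => ‖G (circleMap 0 R θ)‖ := by
      refine (hdiff.continuousOn.comp_continuous (continuous_circleMap 0 R) ?_).norm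
      intro θ
      rw [mem_closedBall_zero_iff]
      simp [norm_circleMap_zero, abs_of_nonneg hr0.le]
    have hInt : (∫ θ : ℝ in (0:ℝ)..2 * π, ‖G (circleMap 0 R θ)‖) ≤ 2 * π * M := by
      have h1 : (∫ θ : ℝ in (0:ℝ)..2 * π, ‖G (circleMap 0 R θ)‖) ≤
          ∫ _ : ℝ in (0:ℝ)..2 * π, M := by
        refine intervalIntegral.integral_mono_on (by positivity) ?_ ?_ ?_
        · exact hcont.intervalIntegrable _ _
        · exact intervalIntegrable_const
        · intro θ _
          refine hM _ ?_
          rw [norm_coeC]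
          simp only [norm_circleMap_zero]
          rw [abs_of_nonneg (show (0:ℝ) ≤ (R:ℝ) from hr0.le)]
          exact hr1
      simpa [mul_comm] using h1
    have hbound := norm_cauchyPowerSeries_le G 0 (R : ℝ) k
    rw [← hpeq, hpnorm] at hbound
    have h2π : (0:ℝ) < 2 * π := by positivity
    have hfinal : ‖a k‖ ≤ M * (r⁻¹) ^ k := by
      refine hbound.trans ?_
      have habs' : |(R:ℝ)| = r := abs_of_nonneg hr0.le
      rw [habs', inv_pow]
      rw [← inv_pow]
      refine mul_le_mul_of_nonneg_right ?_ (by positivity)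
      calc (2 * π)⁻¹ * ∫ θ : ℝ in (0:ℝ)..2 * π, ‖G (circleMap 0 R θ)‖
          ≤ (2 * π)⁻¹ * (2 * π * M) := by
            refine mul_le_mul_of_nonneg_left hInt (by positivity)
        _ = M := by field_simp
    calc ‖a k‖ * r ^ k ≤ (M * (r⁻¹) ^ k) * r ^ k := by
          refine mul_le_mul_of_nonneg_right hfinal (by positivity)
      _ = M := by
          rw [mul_assoc, ← mul_pow]
          simp [inv_mul_cancel₀ hr0.ne']
  -- let r → 1
  have hseq : Tendsto (fun m : ℕ => ‖a k‖ * (1 - 1 / ((m:ℝ) + 2)) ^ k) atTop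
      (𝓝 (‖a k‖ * 1 ^ k)) := by
    refine Tendsto.const_mul _ (Tendsto.pow ?_ k)
    have h0 : Tendsto (fun m : ℕ => 1 / ((m:ℝ) + 2)) atTop (𝓝 0) := by
      simp only [one_div]
      exact (tendsto_atTop_add_const_right atTop 2 tendsto_natCast_atTop_atTop).inv_tendsto_atTop
    simpa using tendsto_const_nhds.sub h0
  have hev : ∀ m : ℕ, ‖a k‖ * (1 - 1 / ((m:ℝ) + 2)) ^ k ≤ M := by
    intro m
    have hm2 : (0:ℝ) < (m:ℝ) + 2 := by positivity
    have h1 : (0:ℝ) < 1 - 1 / ((m:ℝ) + 2) := by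
      rw [sub_pos, div_lt_one hm2]; linarith
    have h2 : 1 - 1 / ((m:ℝ) + 2) < 1 := by
      have : (0:ℝ) < 1 / ((m:ℝ) + 2) := by positivity
      linarith
    exact key _ h1 h2
  have := le_of_tendsto hseq (Filter.Eventually.of_forall hev)
  simpa using this

end QMontelAux

set_option maxHeartbeats 1000000 in
/-- Quaternionic Montel theorem: every uniformly bounded sequence of slice regular functions
on `𝔹` has a subsequence converging uniformly on compact subsets of `𝔹` to a slice regular
function. -/
theorem quaternionic_montel (f : ℕ → Quaternion ℝ → Quaternion ℝ)
    (hreg : ∀ n : ℕ, SliceRegularOnBall (f n))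
    (hbdd : ∃ M : ℝ, ∀ n : ℕ, ∀ q : Quaternion ℝ, ‖q‖ < 1 → ‖f n q‖ ≤ M) :
    ∃ (g : Quaternion ℝ → Quaternion ℝ) (φ : ℕ → ℕ), SliceRegularOnBall g ∧
      StrictMono φ ∧
      ∀ K : Set (Quaternion ℝ), K ⊆ Metric.ball (0 : Quaternion ℝ) 1 → IsCompact K →
        TendstoUniformlyOn (fun n => f (φ n)) g atTop K := by
  classical
  choose a ha using hreg
  obtain ⟨M₀, hM₀⟩ := hbdd
  set M : ℝ := max M₀ 0 with hMdef
  have hM : ∀ n q, ‖q‖ < 1 → ‖f n q‖ ≤ M := fun n q hq => (hM₀ n q hq).trans (le_max_left _ _)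
  have hMnn : (0:ℝ) ≤ M := le_max_right _ _
  have hA : ∀ n k, ‖a n k‖ ≤ M := fun n k => QMontelAux.coeff_le (ha n) (hM n) k
  have hs : IsCompact {v : ℕ → Quaternion ℝ | ∀ k, v k ∈ Metric.closedBall (0:Quaternion ℝ) M} := by
    have h := isCompact_univ_pi (fun _ : ℕ => isCompact_closedBall (0:Quaternion ℝ) M)
    convert h using 1
    ext v
    simp [Set.mem_univ_pi]
  obtain ⟨b, hbmem, φ, hφ, hbtend⟩ :=
    hs.tendsto_subseq (x := a) (fun n k => by simpa using hA n k)
  have hb : ∀ k, ‖b k‖ ≤ M := fun k => by simpa using hbmem k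
  have hbk : ∀ k, Tendsto (fun n => a (φ n) k) atTop (nhds (b k)) := by
    intro k
    exact ((continuous_apply k).tendsto b).comp hbtend
  have hgsum : ∀ q : Quaternion ℝ, ‖q‖ < 1 → Summable (fun k : ℕ => q ^ k * b k) := by
    intro q hq
    refine Summable.of_norm_bounded (g := fun k => M * ‖q‖ ^ k)
      (Summable.mul_left M (summable_geometric_of_lt_one (norm_nonneg q) hq)) ?_
    intro k
    rw [norm_mul, norm_pow, mul_comm]
    exact mul_le_mul_of_nonneg_right (hb k) (by positivity)
  set g : Quaternion ℝ → Quaternion ℝ := fun q => ∑' k, q ^ k * b k with hgdef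
  have hg : ∀ q : Quaternion ℝ, ‖q‖ < 1 → HasSum (fun k : ℕ => q ^ k * b k) (g q) :=
    fun q hq => (hgsum q hq).hasSum
  refine ⟨g, φ, ⟨b, hg⟩, hφ, ?_⟩
  intro K hK hKc
  rcases K.eq_empty_or_nonempty with rfl | hKne
  · intro u hu
    filter_upwards with n x hx
    exact absurd hx (Set.notMem_empty x)
  obtain ⟨q₀, hq₀K, hq₀⟩ := hKc.exists_isMaxOn hKne continuous_norm.continuousOn
  rw [isMaxOn_iff] at hq₀
  set r : ℝ := ‖q₀‖ with hrdef
  have hr1 : r < 1 := by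
    have := hK hq₀K
    simpa [hrdef] using this
  have hr0 : (0:ℝ) ≤ r := norm_nonneg _
  rw [Metric.tendstoUniformlyOn_iff]
  intro ε hε
  have h2M : (0:ℝ) < 2*M+1 := by linarith
  have h1r : (0:ℝ) < 1 - r := by linarith
  obtain ⟨N, hNpow⟩ := exists_pow_lt_of_lt_one
    (show (0:ℝ) < (ε/2) * (1-r) / (2*M+1) by positivity) hr1
  have hN : (2*M+1) * r ^ N * (1-r)⁻¹ < ε/2 := by
    have hlt := mul_lt_mul_of_pos_left hNpow (show (0:ℝ) < (2*M+1)/(1-r) by positivity)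
    have e1 : (2*M+1)/(1-r) * ((ε/2)*(1-r)/(2*M+1)) = ε/2 := by field_simp
    have e2 : (2*M+1)/(1-r) * r ^ N = (2*M+1) * r ^ N * (1-r)⁻¹ := by
      rw [div_eq_mul_inv]; ring
    rw [e1, e2] at hlt
    exact hlt
  set δ : ℝ := ε / (2*((N:ℝ)+1)) with hδdef
  have hδ : (0:ℝ) < δ := by positivity
  have hev : ∀ᶠ n in atTop, ∀ k ∈ Finset.range N, ‖a (φ n) k - b k‖ < δ := by
    rw [eventually_all_finset]
    intro k _
    obtain ⟨n₀, hn₀⟩ := Metric.tendsto_atTop.1 (hbk k) δ hδ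
    refine eventually_atTop.2 ⟨n₀, fun n hn => ?_⟩
    simpa [dist_eq_norm] using hn₀ n hn
  filter_upwards [hev] with n hn
  intro q hq
  have hqr : ‖q‖ ≤ r := hq₀ q hq
  have hq1 : ‖q‖ < 1 := lt_of_le_of_lt hqr hr1
  have hsub : HasSum (fun k : ℕ => q ^ k * (a (φ n) k - b k)) (f (φ n) q - g q) := by
    have h := (ha (φ n) q hq1).sub (hg q hq1)
    have e : (fun k : ℕ => q ^ k * (a (φ n) k - b k))
        = fun k : ℕ => q ^ k * a (φ n) k - q ^ k * b k := by
      funext k; rw [mul_sub]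
    rw [e]; exact h
  set v : ℕ → ℝ := fun k => ‖q ^ k * (a (φ n) k - b k)‖ with hvdef
  have hvle : ∀ k, v k ≤ (2*M+1) * r ^ k := by
    intro k
    have h1 : ‖a (φ n) k - b k‖ ≤ 2*M+1 := by
      refine (norm_sub_le _ _).trans ?_
      have := hA (φ n) k; have := hb k; linarith
    have h2 : ‖q‖ ^ k ≤ r ^ k := pow_le_pow_left₀ (norm_nonneg q) hqr k
    calc v k = ‖q‖ ^ k * ‖a (φ n) k - b k‖ := by rw [hvdef]; simp [norm_mul, norm_pow]
      _ ≤ r ^ k * (2*M+1) := mul_le_mul h2 h1 (norm_nonneg _) (by positivity)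
      _ = (2*M+1) * r ^ k := mul_comm _ _
  have hvsum : Summable v := by
    refine Summable.of_nonneg_of_le (fun k => norm_nonneg _) hvle ?_
    exact Summable.mul_left _ (summable_geometric_of_lt_one hr0 hr1)
  have hnorm : ‖f (φ n) q - g q‖ ≤ ∑' k, v k := by
    rw [← hsub.tsum_eq]
    exact norm_tsum_le_tsum_norm hvsum
  have hsplit : ∑' k, v k = (∑ k ∈ Finset.range N, v k) + ∑' k, v (k + N) :=
    (Summable.sum_add_tsum_nat_add N hvsum).symm
  have hhead : (∑ k ∈ Finset.range N, v k) ≤ (N:ℝ) * δ := by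
    have hb1 : ∀ k ∈ Finset.range N, v k ≤ δ := by
      intro k hk
      have h1 := (hn k hk).le
      have h2 : ‖q‖ ^ k ≤ 1 := pow_le_one₀ (norm_nonneg q) hq1.le
      calc v k = ‖q‖ ^ k * ‖a (φ n) k - b k‖ := by rw [hvdef]; simp [norm_mul, norm_pow]
        _ ≤ 1 * δ := mul_le_mul h2 h1 (norm_nonneg _) zero_le_one
        _ = δ := one_mul _
    calc (∑ k ∈ Finset.range N, v k) ≤ ∑ _k ∈ Finset.range N, δ := Finset.sum_le_sum hb1
      _ = (N:ℝ) * δ := by simp [mul_comm]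
  have hheadlt : (N:ℝ) * δ < ε/2 := by
    have hN0 : (0:ℝ) ≤ (N:ℝ) := Nat.cast_nonneg N
    rw [hδdef, ← mul_div_assoc, div_lt_div_iff₀ (by positivity) (by norm_num : (0:ℝ) < 2)]
    nlinarith [hε]
  have htail : ∑' k, v (k + N) ≤ (2*M+1) * r ^ N * (1-r)⁻¹ := by
    have hs1 : Summable (fun k => v (k + N)) := (summable_nat_add_iff N).2 hvsum
    have e : (fun k : ℕ => (2*M+1) * r ^ (k + N)) = fun k => ((2*M+1) * r ^ N) * r ^ k := by
      funext k; rw [pow_add]; ring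
    have hs2 : Summable (fun k : ℕ => (2*M+1) * r ^ (k + N)) := by
      rw [e]; exact Summable.mul_left _ (summable_geometric_of_lt_one hr0 hr1)
    refine (Summable.tsum_le_tsum (fun k => hvle (k + N)) hs1 hs2).trans ?_
    have : ∑' k : ℕ, (2*M+1) * r ^ (k + N) = ((2*M+1) * r ^ N) * (1-r)⁻¹ := by
      rw [e, tsum_mul_left, tsum_geometric_of_lt_one hr0 hr1]
    rw [this]
  have hfin : ‖f (φ n) q - g q‖ < ε := by
    calc ‖f (φ n) q - g q‖ ≤ ∑' k, v k := hnorm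
      _ = (∑ k ∈ Finset.range N, v k) + ∑' k, v (k + N) := hsplit
      _ < ε/2 + ε/2 :=
          add_lt_add_of_le_of_lt (hhead.trans hheadlt.le) (lt_of_le_of_lt htail hN)
      _ = ε := by ring
  rw [dist_eq_norm, norm_sub_rev]
  exact hfin
end
end
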